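/- If λ₁,…,λₙ are positive real numbers and 1 ≤ r ≤ n−1, then H_r/H_{r+1} ≥ 1/H₁, where H_k = σ_k/C(n,k); equality holds if and only if λ₁ = ⋯ = λₙ. -/

import Mathlib

set_option linter.unusedSectionVars false
open Finset
variable {ι : Type*} [DecidableEq ι] (f : ι → ℝ)

noncomputable def E (f : ι → ℝ) (s : Finset ι) (r : ℕ) : ℝ :=
  ∑ t ∈ s.powersetCard r, ∏ i ∈ t, f i

lemma filter_not_mem (s : Finset ι) (i : ι) (r : ℕ) :
    (s.powersetCard r).filter (fun t => i ∉ t) = (s.erase i).powersetCard r := by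
  ext t
  simp only [mem_filter, mem_powersetCard, subset_erase]
  tauto

lemma sum_filter_mem (s : Finset ι) (i : ι) (hi : i ∈ s) (k : ℕ) :
    ∑ t ∈ (s.powersetCard (k+1)).filter (fun t => i ∈ t), ∏ j ∈ t, f j
      = f i * E f (s.erase i) k := by
  rw [E, Finset.mul_sum]
  apply Finset.sum_nbij' (fun t => t.erase i) (fun t => insert i t)
  · intro t ht
    simp only [mem_filter, mem_powersetCard] at ht
    simp only [mem_powersetCard, subset_erase]
    refine ⟨⟨?_, ?_⟩, ?_⟩
    · exact (erase_subset _ _).trans ht.1.1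
    · exact notMem_erase _ _
    · rw [card_erase_of_mem ht.2, ht.1.2]
      omega
  · intro t ht
    simp only [mem_powersetCard, subset_erase] at ht
    simp only [mem_filter, mem_powersetCard]
    refine ⟨⟨?_, ?_⟩, mem_insert_self _ _⟩
    · exact insert_subset hi (ht.1.1)
    · rw [card_insert_of_notMem ht.1.2, ht.2]
  · intro t ht
    simp only [mem_filter] at ht
    exact insert_erase ht.2
  · intro t ht
    simp only [mem_powersetCard, subset_erase] at ht
    exact erase_insert ht.1.2
  · intro t ht
    simp only [mem_filter] at ht
    exact (Finset.mul_prod_erase t f ht.2).symm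

/-- Split `E s (k+1)` according to membership of `i`. -/
lemma E_split (s : Finset ι) (i : ι) (hi : i ∈ s) (k : ℕ) :
    E f s (k+1) = E f (s.erase i) (k+1) + f i * E f (s.erase i) k := by
  rw [E, ← Finset.sum_filter_add_sum_filter_not (s.powersetCard (k+1)) (fun t => i ∈ t)]
  rw [sum_filter_mem f s i hi k, filter_not_mem]
  simp only [E]; ring

/-- Double counting: `∑ i, f i * σ_k(without i) = (k+1) σ_{k+1}`. -/
lemma sum_mul_E (s : Finset ι) (k : ℕ) :
    ∑ i ∈ s, f i * E f (s.erase i) k = (k+1 : ℝ) * E f s (k+1) := by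
  have h1 : ∀ i ∈ s, f i * E f (s.erase i) k
      = ∑ t ∈ (s.powersetCard (k+1)).filter (fun t => i ∈ t), ∏ j ∈ t, f j :=
    fun i hi => (sum_filter_mem f s i hi k).symm
  rw [Finset.sum_congr rfl h1]
  simp only [Finset.sum_filter]
  rw [Finset.sum_comm]
  rw [E, Finset.mul_sum, Finset.sum_congr rfl]
  intro t ht
  obtain ⟨hts, htc⟩ := mem_powersetCard.mp ht
  rw [Finset.sum_ite_mem, Finset.inter_eq_right.mpr hts, Finset.sum_const, htc,
    nsmul_eq_mul]
  push_cast; ring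

/-- Double counting: `∑ i ∈ s, σ_k(without i) = (|s|−k) σ_k`. -/
lemma sum_E (s : Finset ι) (k : ℕ) :
    ∑ i ∈ s, E f (s.erase i) k = ((s.card : ℝ) - k) * E f s k := by
  have h1 : ∀ i ∈ s, E f (s.erase i) k
      = ∑ t ∈ (s.powersetCard k).filter (fun t => i ∉ t), ∏ j ∈ t, f j := by
    intro i hi; rw [filter_not_mem]; rfl
  rw [Finset.sum_congr rfl h1]
  simp only [Finset.sum_filter]
  rw [Finset.sum_comm]
  rw [E, Finset.mul_sum, Finset.sum_congr rfl]
  intro t ht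
  obtain ⟨hts, htc⟩ := mem_powersetCard.mp ht
  rw [← Finset.sum_filter, ← Finset.sdiff_eq_filter, Finset.sum_const,
    Finset.card_sdiff_of_subset hts, htc, nsmul_eq_mul, Nat.cast_sub (htc ▸ Finset.card_le_card hts)]

lemma E_nonneg (s : Finset ι) (k : ℕ) (h : ∀ i ∈ s, 0 ≤ f i) : 0 ≤ E f s k := by
  apply Finset.sum_nonneg
  intro t ht
  exact Finset.prod_nonneg fun i hi => h i ((mem_powersetCard.mp ht).1 hi)

lemma E_pos (s : Finset ι) (k : ℕ) (h : ∀ i ∈ s, 0 < f i) (hk : k ≤ s.card) :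
    0 < E f s k := by
  apply Finset.sum_pos
  · intro t ht
    exact Finset.prod_pos fun i hi => h i ((mem_powersetCard.mp ht).1 hi)
  · exact Finset.powersetCard_nonempty.mpr hk

lemma E_one (s : Finset ι) : E f s 1 = ∑ i ∈ s, f i := by
  rw [E, Finset.powersetCard_one, Finset.sum_map]
  simp

lemma sum_offDiag (g : ι → ι → ℝ) (s : Finset ι) :
    ∑ p ∈ s.offDiag, g p.1 p.2 = ∑ i ∈ s, ∑ j ∈ s.erase i, g i j := by
  rw [show s.offDiag = (s ×ˢ s).filter (fun a => a.1 ≠ a.2) from by ext p; simp [Finset.mem_offDiag, and_assoc], Finset.sum_filter, Finset.sum_product]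
  apply Finset.sum_congr rfl
  intro i _
  rw [← Finset.sum_filter]
  apply Finset.sum_congr _ (fun _ _ => rfl)
  ext j
  simp [Finset.mem_erase, ne_comm, and_comm]

lemma sum_offDiag_swap (g : ι → ι → ℝ) (s : Finset ι) :
    ∑ p ∈ s.offDiag, g p.1 p.2 = ∑ p ∈ s.offDiag, g p.2 p.1 := by
  apply Finset.sum_nbij' (fun p => Prod.swap p) (fun p => Prod.swap p)
  · rintro ⟨a, b⟩ h
    rw [Finset.mem_offDiag] at h ⊢
    exact ⟨h.2.1, h.1, Ne.symm h.2.2⟩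
  · rintro ⟨a, b⟩ h
    rw [Finset.mem_offDiag] at h ⊢
    exact ⟨h.2.1, h.1, Ne.symm h.2.2⟩
  · intro p _; rfl
  · intro p _; rfl
  · intro p _; rfl

/-- The key sum-of-squares identity. -/
lemma key_identity (s : Finset ι) (m : ℕ) :
    2 * (((s.card : ℝ) - (m+1)) * ((∑ i ∈ s, f i) * E f s (m+1))
        - (s.card : ℝ) * (m+2) * E f s (m+2))
      = ∑ p ∈ s.offDiag, (f p.1 - f p.2)^2 * E f ((s.erase p.1).erase p.2) m := by
  set c : ℝ := (s.card : ℝ) with hc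
  set X : ℝ := ∑ i ∈ s, f i ^ 2 * E f (s.erase i) m with hX
  have hcard : ∀ i ∈ s, ((s.erase i).card : ℝ) = c - 1 := by
    intro i hi
    rw [Finset.card_erase_of_mem hi, Nat.cast_sub (Finset.card_pos.mpr ⟨i, hi⟩)]
    simp [hc]
  -- σ₁ σ_{m+1} = (m+2) σ_{m+2} + X
  have h1 : (∑ i ∈ s, f i) * E f s (m+1) = (m+2 : ℝ) * E f s (m+2) + X := by
    rw [Finset.sum_mul]
    have : ∀ i ∈ s, f i * E f s (m+1)
        = f i * E f (s.erase i) (m+1) + f i ^2 * E f (s.erase i) m := by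
      intro i hi
      rw [E_split f s i hi m]; ring
    rw [Finset.sum_congr rfl this, Finset.sum_add_distrib, sum_mul_E, hX]
    push_cast; ring
  -- first square term
  have h2 : ∑ p ∈ s.offDiag, f p.1 ^2 * E f ((s.erase p.1).erase p.2) m
      = (c - (m+1)) * X := by
    rw [sum_offDiag (fun i j => f i ^2 * E f ((s.erase i).erase j) m) s, hX,
      Finset.mul_sum]
    apply Finset.sum_congr rfl
    intro i hi
    rw [← Finset.mul_sum, sum_E f (s.erase i) m, hcard i hi]
    ring
  -- cross term
  have h3 : ∑ p ∈ s.offDiag, f p.1 * f p.2 * E f ((s.erase p.1).erase p.2) m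
      = (m+1 : ℝ) * ((m+2 : ℝ) * E f s (m+2)) := by
    rw [sum_offDiag (fun i j => f i * f j * E f ((s.erase i).erase j) m) s]
    have inner : ∀ i ∈ s, ∑ j ∈ s.erase i, f i * f j * E f ((s.erase i).erase j) m
        = f i * ((m+1 : ℝ) * E f (s.erase i) (m+1)) := by
      intro i hi
      have : ∀ j ∈ s.erase i, f i * f j * E f ((s.erase i).erase j) m
          = f i * (f j * E f ((s.erase i).erase j) m) := fun j _ => by ring
      rw [Finset.sum_congr rfl this, ← Finset.mul_sum, sum_mul_E f (s.erase i) m]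
    rw [Finset.sum_congr rfl inner]
    have step : ∀ i ∈ s, f i * ((m+1 : ℝ) * E f (s.erase i) (m+1))
        = (m+1 : ℝ) * (f i * E f (s.erase i) (m+1)) := fun i _ => by ring
    rw [Finset.sum_congr rfl step, ← Finset.mul_sum]
    have h4 := sum_mul_E f s (m+1)
    rw [show m+1+1 = m+2 from rfl] at h4
    rw [h4]
    push_cast; ring
  have h2' : ∑ p ∈ s.offDiag, f p.2 ^2 * E f ((s.erase p.1).erase p.2) m
      = (c - (m+1)) * X := by
    rw [← h2]
    rw [sum_offDiag_swap (fun i j => f i ^2 * E f ((s.erase i).erase j) m) s]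
    apply Finset.sum_congr rfl
    intro p hp
    rw [Finset.erase_right_comm]
  have expand : ∀ p ∈ s.offDiag, (f p.1 - f p.2)^2 * E f ((s.erase p.1).erase p.2) m
      = f p.1^2 * E f ((s.erase p.1).erase p.2) m
        + f p.2^2 * E f ((s.erase p.1).erase p.2) m
        - 2 * (f p.1 * f p.2 * E f ((s.erase p.1).erase p.2) m) := fun p _ => by ring
  rw [Finset.sum_congr rfl expand]
  rw [Finset.sum_sub_distrib, Finset.sum_add_distrib, h2, h2', ← Finset.mul_sum, h3, h1]
  push_cast; ring



/-- The `r`-th elementary symmetric polynomial of `λ₁,…,λₙ`. -/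
noncomputable def esymm {n : ℕ} (lam : Fin n → ℝ) (r : ℕ) : ℝ :=
  ∑ t ∈ Finset.powersetCard r (Finset.univ : Finset (Fin n)), ∏ i ∈ t, lam i

/-- The normalized symmetric function `H_r = σ_r / C(n,r)`. -/
noncomputable def Hmean {n : ℕ} (lam : Fin n → ℝ) (r : ℕ) : ℝ :=
  esymm lam r / (n.choose r : ℝ)

/-- For positive `λᵢ` and `1 ≤ r ≤ n−1`, `H_r/H_{r+1} ≥ 1/H₁`, with equality
iff all the `λᵢ` are equal. -/
theorem stmt_12 {n : ℕ} (lam : Fin n → ℝ) (hpos : ∀ i, 0 < lam i)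
    (r : ℕ) (hr1 : 1 ≤ r) (hr2 : r ≤ n - 1) :
    1 / Hmean lam 1 ≤ Hmean lam r / Hmean lam (r + 1) ∧
      (Hmean lam r / Hmean lam (r + 1) = 1 / Hmean lam 1 ↔
        ∀ i j, lam i = lam j) := by
  classical
  have hn2 : 2 ≤ n := by omega
  obtain ⟨m, rfl⟩ : ∃ m, r = m + 1 := ⟨r - 1, by omega⟩
  have hmn : m + 2 ≤ n := by omega
  have hcard : (Finset.univ : Finset (Fin n)).card = n := by simp
  have hE : ∀ k, esymm lam k = E lam Finset.univ k := fun k => rfl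
  have hEpos : ∀ k, k ≤ n → 0 < E lam Finset.univ k := by
    intro k hk
    exact E_pos lam _ k (fun i _ => hpos i) (by rw [hcard]; exact hk)
  rw [show m + 1 + 1 = m + 2 from rfl]
  set D := ∑ p ∈ (Finset.univ : Finset (Fin n)).offDiag,
      (lam p.1 - lam p.2)^2 * E lam ((Finset.univ.erase p.1).erase p.2) m with hD
  have hkey := key_identity lam (Finset.univ : Finset (Fin n)) m
  rw [hcard, ← hD] at hkey
  have hterm : ∀ p ∈ (Finset.univ : Finset (Fin n)).offDiag,
      0 ≤ (lam p.1 - lam p.2)^2 * E lam ((Finset.univ.erase p.1).erase p.2) m :=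
    fun p _ => mul_nonneg (sq_nonneg _) (E_nonneg lam _ m (fun i _ => (hpos i).le))
  have hD0 : 0 ≤ D := Finset.sum_nonneg hterm
  have hDeq : D = 0 ↔ ∀ i j, lam i = lam j := by
    constructor
    · intro h0 i j
      by_cases hij : i = j
      · rw [hij]
      · have hz := (Finset.sum_eq_zero_iff_of_nonneg hterm).mp h0 (i, j)
          (by simp [Finset.mem_offDiag, hij])
        have hEij : 0 < E lam ((Finset.univ.erase i).erase j) m := by
          apply E_pos lam _ m (fun i _ => hpos i)
          rw [Finset.card_erase_of_mem (Finset.mem_erase.mpr ⟨fun h => hij h.symm, Finset.mem_univ j⟩),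
            Finset.card_erase_of_mem (Finset.mem_univ i), hcard]
          omega
        have hsq : (lam i - lam j)^2 = 0 := by
          rcases mul_eq_zero.mp hz with h | h
          · exact h
          · exact absurd h hEij.ne'
        have := sq_eq_zero_iff.mp hsq
        linarith
    · intro hall
      apply Finset.sum_eq_zero
      intro p _
      rw [hall p.1 p.2]
      ring
  have hchoose : (n.choose (m+2) : ℝ) * ((m:ℝ)+2)
      = (n.choose (m+1) : ℝ) * ((n:ℝ) - ((m:ℝ)+1)) := by
    have h := Nat.choose_succ_right_eq n (m+1)
    have h2 : ((n.choose (m+1+1) * (m+1+1) : ℕ) : ℝ)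
        = ((n.choose (m+1) * (n - (m+1)) : ℕ) : ℝ) := by exact_mod_cast congrArg Nat.cast h
    push_cast [Nat.cast_sub (show m+1 ≤ n by omega)] at h2
    linear_combination h2
  have hchr : (0:ℝ) < (n.choose (m+1) : ℝ) := by
    exact_mod_cast Nat.choose_pos (by omega : m+1 ≤ n)
  have hchr1 : (0:ℝ) < (n.choose (m+2) : ℝ) := by
    exact_mod_cast Nat.choose_pos hmn
  have hnR : (0:ℝ) < (n:ℝ) := by positivity
  have hcpos : (0:ℝ) < 2 * ((m:ℝ)+2) := by positivity
  have heq : (E lam Finset.univ (m+1) * (∑ i : Fin n, lam i)) * (n.choose (m+2) : ℝ)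
      - E lam Finset.univ (m+2) * ((n.choose (m+1) : ℝ) * (n:ℝ))
      = D * (n.choose (m+1) : ℝ) / (2*((m:ℝ)+2)) := by
    rw [eq_div_iff hcpos.ne']
    linear_combination (n.choose (m+1) : ℝ) * hkey
      + 2 * (E lam Finset.univ (m+1) * (∑ i : Fin n, lam i)) * hchoose
  have hH1 : 0 < Hmean lam 1 := by
    rw [Hmean, Nat.choose_one_right, hE]
    exact div_pos (hEpos 1 (by omega)) hnR
  have hHr1 : 0 < Hmean lam (m+2) := by
    rw [Hmean, hE]
    exact div_pos (hEpos (m+2) hmn) hchr1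
  have hQ0 : 0 ≤ D * (n.choose (m+1) : ℝ) / (2*((m:ℝ)+2)) :=
    div_nonneg (mul_nonneg hD0 hchr.le) hcpos.le
  have hunfold : Hmean lam (m+1) * Hmean lam 1
      = (E lam Finset.univ (m+1) * (∑ i : Fin n, lam i)) / ((n.choose (m+1) : ℝ) * (n:ℝ)) := by
    rw [Hmean, Hmean, hE, hE, Nat.choose_one_right, E_one, div_mul_div_comm]
  have hr1unfold : Hmean lam (m+2) = E lam Finset.univ (m+2) / (n.choose (m+2) : ℝ) := by
    rw [Hmean, hE]
  constructor
  · rw [div_le_div_iff₀ hH1 hHr1, one_mul, hunfold, hr1unfold,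
      div_le_div_iff₀ hchr1 (mul_pos hchr hnR)]
    linarith
  · rw [div_eq_div_iff hHr1.ne' hH1.ne', one_mul, hunfold, hr1unfold,
      div_eq_div_iff (mul_pos hchr hnR).ne' hchr1.ne']
    rw [← hDeq]
    constructor
    · intro h
      have hQ : D * (n.choose (m+1) : ℝ) / (2*((m:ℝ)+2)) = 0 := by
        rw [← heq]; linarith
      rcases mul_eq_zero.mp (div_eq_zero_iff.mp hQ |>.resolve_right hcpos.ne') with h' | h'
      · exact h'
      · exact absurd h' hchr.ne'
    · intro h
      have hz : D * (n.choose (m+1) : ℝ) / (2*((m:ℝ)+2)) = 0 := by rw [h]; simp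
      rw [hz] at heq
      linarith
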